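/- In the free right-symmetric algebra RS(X) on X = {aₙ : n ∈ ℤ}, let I be the ideal generated by S = {aₙ∘aₘ − a₀∘a_{n+m} : n,m ∈ ℤ, n ≠ 0}. Then for all k,m ∈ ℤ: (a₀∘aₖ)∘aₘ − (a₀∘aₘ)∘aₖ ∈ I, and (a₀∘a_{k+1})∘aₘ − (a₀∘aₖ)∘a_{m+1} ∈ I. -/
import Mathlib


/-- Let `V` be a right-symmetric (pre-Lie) algebra (in particular this applies to the
free right-symmetric algebra `RS(X)` on `X = {aₙ : n ∈ ℤ}`), let `a : ℤ → V` be the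
family of generators, and let `I` be the (two-sided) ideal generated by
`S = {aₙ∘aₘ − a₀∘a_{n+m} : n ≠ 0}`, i.e. membership in every submodule which contains
`S` and is closed under left and right multiplication. Then for all `j, m ∈ ℤ`:
`(a₀∘aⱼ)∘aₘ − (a₀∘aₘ)∘aⱼ ∈ I` and `(a₀∘a_{j+1})∘aₘ − (a₀∘aⱼ)∘a_{m+1} ∈ I`. -/
theorem stmt_17 (k V : Type) [Field k] [CharZero k] [AddCommGroup V] [Module k V]
    (mul : V →ₗ[k] V →ₗ[k] V)
    (rsym : ∀ x y z : V,
      mul (mul x y) z - mul x (mul y z) = mul (mul x z) y - mul x (mul z y))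
    (a : ℤ → V) :
    ∀ J : Submodule k V,
      (∀ x ∈ J, ∀ y : V, mul x y ∈ J ∧ mul y x ∈ J) →
      (∀ n m : ℤ, n ≠ 0 → mul (a n) (a m) - mul (a 0) (a (n + m)) ∈ J) →
      ∀ j m : ℤ,
        mul (mul (a 0) (a j)) (a m) - mul (mul (a 0) (a m)) (a j) ∈ J ∧
        mul (mul (a 0) (a (j + 1))) (a m) - mul (mul (a 0) (a j)) (a (m + 1)) ∈ J := by
  intro J hJ hS
  -- commutators of generators are in J
  have comm : ∀ n m : ℤ, mul (a n) (a m) - mul (a m) (a n) ∈ J := by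
    intro n m
    by_cases hn : n = 0
    · by_cases hm : m = 0
      · subst hn; subst hm; simp
      · subst hn
        have h := hS m 0 hm
        rw [add_zero] at h
        have := J.neg_mem h
        rwa [neg_sub] at this
    · by_cases hm : m = 0
      · subst hm
        have h := hS n 0 hn
        rw [add_zero] at h
        exact h
      · have h1 := hS n m hn
        have h2 := hS m n hm
        rw [add_comm] at h2
        have := J.sub_mem h1 h2
        rwa [sub_sub_sub_cancel_right] at this
  -- key lemma: for any x, (x∘aⱼ)∘aₘ − (x∘aₘ)∘aⱼ ∈ J
  have c1 : ∀ (x : V) (j m : ℤ),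
      mul (mul x (a j)) (a m) - mul (mul x (a m)) (a j) ∈ J := by
    intro x j m
    have hr := rsym x (a j) (a m)
    have h0 : mul (mul x (a j)) (a m) - mul (mul x (a m)) (a j)
        = mul x (mul (a j) (a m) - mul (a m) (a j)) := by
      rw [map_sub]
      exact sub_eq_sub_iff_sub_eq_sub.mpr hr
    rw [h0]
    exact (hJ _ (comm j m) x).2
  intro j m
  refine ⟨c1 (a 0) j m, ?_⟩
  -- t1 : (a0 a(j+1))am − (a1 aj)am ∈ J
  have h1 := hS 1 j one_ne_zero
  rw [add_comm] at h1
  have t1 : mul (mul (a 0) (a (j + 1))) (a m) - mul (mul (a 1) (a j)) (a m) ∈ J := by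
    have := J.neg_mem ((hJ _ h1 (a m)).1)
    rwa [map_sub, LinearMap.sub_apply, neg_sub] at this
  have t2 : mul (mul (a 1) (a j)) (a m) - mul (mul (a 1) (a m)) (a j) ∈ J := c1 (a 1) j m
  have h3 := hS 1 m one_ne_zero
  rw [add_comm] at h3
  have t3 : mul (mul (a 1) (a m)) (a j) - mul (mul (a 0) (a (m + 1))) (a j) ∈ J := by
    have := (hJ _ h3 (a j)).1
    rwa [map_sub, LinearMap.sub_apply] at this
  have t4 : mul (mul (a 0) (a (m + 1))) (a j) - mul (mul (a 0) (a j)) (a (m + 1)) ∈ J :=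
    c1 (a 0) (m + 1) j
  have hsum := J.add_mem (J.add_mem (J.add_mem t1 t2) t3) t4
  convert hsum using 1
  abel
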